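/- arXiv:1309.7701 — 5 statements merged into one kernel-verified Lean document; each statement's English description precedes it below -/
import Mathlib

section
/- The geometric operator mean (A,B) ↦ A#B = A^{1/2}(A^{-1/2} B A^{-1/2})^{1/2} A^{1/2}, defined on pairs of positive definite n×n complex matrices, is jointly concave: for all positive definite n×n matrices A₁, A₂, B₁, B₂ and all λ ∈ [0,1], (λA₁ + (1−λ)A₂) # (λB₁ + (1−λ)B₂) ≥ λ (A₁#B₁) + (1−λ)(A₂#B₂) in the Loewner order. -/
open scoped ComplexOrder

/-- The geometric operator mean `A # B = A^{1/2} (A^{-1/2} B A^{-1/2})^{1/2} A^{1/2}`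
of positive definite complex matrices, via the functional calculus for Hermitian
matrices. -/
noncomputable def Matrix.geomMean {n : ℕ} (A B : Matrix (Fin n) (Fin n) ℂ) :
    Matrix (Fin n) (Fin n) ℂ :=
  cfc Real.sqrt A *
    cfc Real.sqrt (cfc (fun t => (Real.sqrt t)⁻¹) A * B * cfc (fun t => (Real.sqrt t)⁻¹) A) *
    cfc Real.sqrt A

open Matrix

namespace GeomMeanAux

variable {n : ℕ}

local notation "M𝕜" => Matrix (Fin n) (Fin n) ℂ

lemma contOn (f : ℝ → ℝ) (A : M𝕜) : ContinuousOn f (spectrum ℝ A) := by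
  rw [continuousOn_iff_continuous_restrict]; exact continuous_of_discreteTopology

lemma spectrum_pos {A : M𝕜} (hA : A.PosDef) : ∀ x ∈ spectrum ℝ A, 0 < x := by
  intro x hx
  rw [hA.isHermitian.spectrum_real_eq_range_eigenvalues] at hx
  obtain ⟨i, rfl⟩ := hx
  exact hA.eigenvalues_pos i

lemma herm_cfc (f : ℝ → ℝ) (A : M𝕜) : (cfc f A).IsHermitian :=
  cfc_predicate f A

lemma sqrt_mul_sqrt {A : M𝕜} (hA : A.PosDef) : cfc Real.sqrt A * cfc Real.sqrt A = A := by
  rw [← cfc_mul _ _ A (contOn _ _) (contOn _ _),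
    cfc_congr (g := fun x => x) (fun x hx => Real.mul_self_sqrt (spectrum_pos hA x hx).le)]
  exact cfc_id' ℝ A hA.isHermitian

lemma sqrt_mul_isqrt {A : M𝕜} (hA : A.PosDef) :
    cfc Real.sqrt A * cfc (fun t => (Real.sqrt t)⁻¹) A = 1 := by
  rw [← cfc_mul _ _ A (contOn _ _) (contOn _ _),
    cfc_congr (g := fun _ => 1)
      (fun x hx => mul_inv_cancel₀ (Real.sqrt_ne_zero'.mpr (spectrum_pos hA x hx)))]
  exact cfc_const_one ℝ A hA.isHermitian

lemma isqrt_mul_sqrt {A : M𝕜} (hA : A.PosDef) :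
    cfc (fun t => (Real.sqrt t)⁻¹) A * cfc Real.sqrt A = 1 := by
  rw [← cfc_mul _ _ A (contOn _ _) (contOn _ _),
    cfc_congr (g := fun _ => 1)
      (fun x hx => inv_mul_cancel₀ (Real.sqrt_ne_zero'.mpr (spectrum_pos hA x hx)))]
  exact cfc_const_one ℝ A hA.isHermitian

/-- `cfc` of a nonnegative function is positive semidefinite. -/
lemma psd_cfc {A : M𝕜} (hA : A.IsHermitian) {f : ℝ → ℝ}
    (hf : ∀ x ∈ spectrum ℝ A, 0 ≤ f x) : (cfc f A).PosSemidef := by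
  have key : cfc f A = cfc (fun t => Real.sqrt (f t)) A * cfc (fun t => Real.sqrt (f t)) A := by
    rw [← cfc_mul _ _ A (contOn _ _) (contOn _ _)]
    exact cfc_congr (fun x hx => (Real.mul_self_sqrt (hf x hx)).symm)
  rw [key]
  have hC := herm_cfc (fun t => Real.sqrt (f t)) A
  simpa [hC.eq] using posSemidef_conjTranspose_mul_self (cfc (fun t => Real.sqrt (f t)) A)

/-- Conjugation of a positive definite matrix by an invertible Hermitian matrix. -/
lemma posdef_conj {B C D : M𝕜} (hB : B.PosDef) (hC : C.IsHermitian) (hCD : D * C = 1) :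
    (C * B * C).PosDef := by
  refine Matrix.PosDef.of_dotProduct_mulVec_pos ?_ ?_
  · show (C * B * C)ᴴ = C * B * C
    rw [conjTranspose_mul, conjTranspose_mul, hC.eq, hB.isHermitian.eq, mul_assoc]
  · intro x hx
    have hy : C *ᵥ x ≠ 0 := by
      intro h0
      apply hx
      have : D *ᵥ (C *ᵥ x) = x := by rw [mulVec_mulVec, hCD, one_mulVec]
      rw [h0, mulVec_zero] at this
      exact this.symm
    have e1 : star x ⬝ᵥ ((C * B * C) *ᵥ x) = star (C *ᵥ x) ⬝ᵥ (B *ᵥ (C *ᵥ x)) := by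
      rw [star_mulVec, hC.eq, ← mulVec_mulVec, ← mulVec_mulVec, dotProduct_mulVec]
    rw [e1]
    exact hB.dotProduct_mulVec_pos hy

lemma isqrt_herm (A : M𝕜) : (cfc (fun t => (Real.sqrt t)⁻¹) A).IsHermitian := herm_cfc _ A
lemma sqrt_herm (A : M𝕜) : (cfc Real.sqrt A).IsHermitian := herm_cfc _ A

/-- The "inner" matrix `A^{-1/2} B A^{-1/2}` is positive definite. -/
lemma inner_posdef {A B : M𝕜} (hA : A.PosDef) (hB : B.PosDef) :
    (cfc (fun t => (Real.sqrt t)⁻¹) A * B * cfc (fun t => (Real.sqrt t)⁻¹) A).PosDef :=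
  posdef_conj hB (isqrt_herm A) (sqrt_mul_isqrt hA)

lemma mul_isqrt_isqrt {A : M𝕜} (hA : A.PosDef) :
    A * (cfc (fun t => (Real.sqrt t)⁻¹) A * cfc (fun t => (Real.sqrt t)⁻¹) A) = 1 := by
  set s := cfc Real.sqrt A
  set i := cfc (fun t => (Real.sqrt t)⁻¹) A
  have h1 : s * i = 1 := sqrt_mul_isqrt hA
  calc A * (i * i) = (s * s) * (i * i) := by rw [sqrt_mul_sqrt hA]
    _ = s * ((s * i) * i) := by simp only [mul_assoc]
    _ = 1 := by rw [h1, one_mul, h1]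

lemma inv_eq_isqrt_sq {A : M𝕜} (hA : A.PosDef) :
    A⁻¹ = cfc (fun t => (Real.sqrt t)⁻¹) A * cfc (fun t => (Real.sqrt t)⁻¹) A :=
  inv_eq_right_inv (mul_isqrt_isqrt hA)

noncomputable def invertibleA {A : M𝕜} (hA : A.PosDef) : Invertible A :=
  invertibleOfRightInverse A _ (mul_isqrt_isqrt hA)


lemma geomMean_herm {A B : M𝕜} : (Matrix.geomMean A B).IsHermitian := by
  unfold Matrix.geomMean
  set s := cfc Real.sqrt A
  set S := cfc Real.sqrt (cfc (fun t => (Real.sqrt t)⁻¹) A * B * cfc (fun t => (Real.sqrt t)⁻¹) A)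
  show (s * S * s)ᴴ = s * S * s
  rw [conjTranspose_mul, conjTranspose_mul, (sqrt_herm A).eq, (herm_cfc _ _).eq, mul_assoc s S s]

lemma riccati {A B : M𝕜} (hA : A.PosDef) (hB : B.PosDef) :
    Matrix.geomMean A B * A⁻¹ * Matrix.geomMean A B = B := by
  set s := cfc Real.sqrt A with hs
  set i := cfc (fun t => (Real.sqrt t)⁻¹) A with hi
  set S := cfc Real.sqrt (i * B * i) with hS
  have h1 : s * i = 1 := sqrt_mul_isqrt hA
  have h2 : i * s = 1 := isqrt_mul_sqrt hA
  have hSS : S * S = i * B * i := sqrt_mul_sqrt (inner_posdef hA hB)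
  have e1 : ∀ X : M𝕜, s * (i * X) = X := fun X => by rw [← mul_assoc, h1, one_mul]
  have e2 : ∀ X : M𝕜, i * (s * X) = X := fun X => by rw [← mul_assoc, h2, one_mul]
  have hinv : A⁻¹ = i * i := inv_eq_isqrt_sq hA
  show (s * S * s) * A⁻¹ * (s * S * s) = B
  rw [hinv]
  calc (s * S * s) * (i * i) * (s * S * s)
      = s * (S * (s * (i * (i * (s * (S * s)))))) := by simp only [mul_assoc]
    _ = s * (S * (S * s)) := by rw [e1, e2]
    _ = s * ((S * S) * s) := by rw [← mul_assoc S S s]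
    _ = s * (i * (B * (i * s))) := by rw [hSS]; simp only [mul_assoc]
    _ = B := by rw [h2, mul_one, e1]

/-- The block matrix `[[A, G],[G, B]]` with `G = A # B` is PSD. -/
lemma block_psd {A B : M𝕜} (hA : A.PosDef) (hB : B.PosDef) :
    (Matrix.fromBlocks A (Matrix.geomMean A B) (Matrix.geomMean A B) B).PosSemidef := by
  haveI := invertibleA hA
  have h := (Matrix.PosDef.fromBlocks₁₁ (Matrix.geomMean A B) B hA).mpr ?_
  · rwa [geomMean_herm.eq] at h
  · rw [geomMean_herm.eq, riccati hA hB, sub_self]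
    exact Matrix.PosSemidef.zero

lemma sqrt_mono_core {Y Z : M𝕜}
    (hY : Y.IsHermitian) (hZ : Z.PosSemidef)
    (h : (Z * Z - Y * Y).PosSemidef) : (Z - Y).PosSemidef := by
  have hD : (Z - Y).IsHermitian := hZ.1.sub hY
  apply hD.posSemidef_iff_eigenvalues_nonneg.mpr
  intro i
  by_contra hneg
  push_neg at hneg
  set l : ℝ := hD.eigenvalues i with hl
  obtain ⟨v, hv0, hev⟩ : ∃ v : Fin n → ℂ, v ≠ 0 ∧ (Z - Y) *ᵥ v = (l : ℂ) • v := by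
    refine ⟨⇑(hD.eigenvectorBasis i), fun h0 => hD.eigenvectorBasis.orthonormal.ne_zero i
      (WithLp.ofLp_injective 2 (by rw [h0]; rfl)), ?_⟩
    rw [hD.mulVec_eigenvectorBasis i]
    ext j
    simp [Complex.real_smul, hl]
  set q : ℂ := star v ⬝ᵥ (Z *ᵥ v) with hq
  set r : ℂ := star v ⬝ᵥ (Y *ᵥ v) with hr
  have hq0 : 0 ≤ q := hZ.dotProduct_mulVec_nonneg v
  have hc : 0 < star v ⬝ᵥ v := dotProduct_star_self_pos_iff.mpr hv0
  have hl0 : (l : ℂ) < 0 := by exact_mod_cast hneg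
  have hqr : q - r = (l : ℂ) * (star v ⬝ᵥ v) := by
    rw [hq, hr, ← dotProduct_sub, ← sub_mulVec, hev, dotProduct_smul, smul_eq_mul]
  have e2 : star v ⬝ᵥ (((Z - Y) * (Z + Y)) *ᵥ v) = (l : ℂ) * (q + r) := by
    rw [← mulVec_mulVec, dotProduct_mulVec]
    have hst : star v ᵥ* (Z - Y) = (l : ℂ) • star v := by
      have h1 := star_mulVec (Z - Y) v
      rw [hD.eq] at h1
      rw [← h1, hev, star_smul]
      simp
    rw [hst, smul_dotProduct, add_mulVec, dotProduct_add, ← hq, ← hr, smul_eq_mul]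
  have e3 : star v ⬝ᵥ (((Z + Y) * (Z - Y)) *ᵥ v) = (l : ℂ) * (q + r) := by
    rw [← mulVec_mulVec, hev, mulVec_smul, dotProduct_smul, add_mulVec, dotProduct_add, ← hq, ← hr,
      smul_eq_mul]
  have h2 : 0 ≤ (l : ℂ) * (q + r) + (l : ℂ) * (q + r) := by
    have heq : (Z - Y) * (Z + Y) + (Z + Y) * (Z - Y) = (Z * Z - Y * Y) + (Z * Z - Y * Y) := by
      noncomm_ring
    have h3 := add_nonneg (h.dotProduct_mulVec_nonneg v) (h.dotProduct_mulVec_nonneg v)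
    rw [← dotProduct_add, ← add_mulVec, ← heq, add_mulVec, dotProduct_add, e2, e3] at h3
    exact h3
  have hr_pos : 0 < r := lt_of_le_of_lt hq0 (sub_neg.mp (hqr ▸ mul_neg_of_neg_of_pos hl0 hc))
  have hsum : (l : ℂ) * (q + r) < 0 :=
    mul_neg_of_neg_of_pos hl0 (add_pos_of_nonneg_of_pos hq0 hr_pos)
  have hlt : (l : ℂ) * (q + r) + (l : ℂ) * (q + r) < 0 := by simpa using add_lt_add hsum hsum
  exact absurd h2 hlt.not_ge

/-- If the block matrix `[[A, X],[X, B]]` is PSD then `X ≤ A # B`. -/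
lemma le_geomMean {A B X : M𝕜} (hA : A.PosDef) (hB : B.PosDef) (hX : X.IsHermitian)
    (hbl : (Matrix.fromBlocks A X X B).PosSemidef) :
    (Matrix.geomMean A B - X).PosSemidef := by
  haveI := invertibleA hA
  set s := cfc Real.sqrt A with hs
  set i := cfc (fun t => (Real.sqrt t)⁻¹) A with hi
  have h1 : s * i = 1 := sqrt_mul_isqrt hA
  have h2 : i * s = 1 := isqrt_mul_sqrt hA
  have hinv : A⁻¹ = i * i := inv_eq_isqrt_sq hA
  have hih : i.IsHermitian := isqrt_herm A
  have hsh : s.IsHermitian := sqrt_herm A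
  have hschur : (B - Xᴴ * A⁻¹ * X).PosSemidef :=
    (Matrix.PosDef.fromBlocks₁₁ X B hA).mp (by rw [hX.eq]; exact hbl)
  rw [hX.eq] at hschur
  set S := cfc Real.sqrt (i * B * i) with hS
  set Y := i * X * i with hY
  have hYh : Y.IsHermitian := by
    show (i * X * i)ᴴ = i * X * i
    rw [conjTranspose_mul, conjTranspose_mul, hih.eq, hX.eq, mul_assoc]
  have hZpsd : S.PosSemidef := psd_cfc (inner_posdef hA hB).isHermitian
    (fun x hx => Real.sqrt_nonneg x)
  have hZZ : S * S = i * B * i := sqrt_mul_sqrt (inner_posdef hA hB)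
  have hYY : Y * Y = i * (X * A⁻¹ * X) * i := by
    rw [hY, hinv]
    simp only [mul_assoc]
  have hdiff : S * S - Y * Y = i * (B - X * A⁻¹ * X) * i := by
    rw [hZZ, hYY, mul_sub, sub_mul]
  have hZY : (S - Y).PosSemidef := by
    apply sqrt_mono_core hYh hZpsd
    rw [hdiff]
    have := hschur.mul_mul_conjTranspose_same i
    rwa [hih.eq] at this
  -- G - X = s * (S - Y) * s
  have hfin : Matrix.geomMean A B - X = s * (S - Y) * s := by
    have hsys : s * Y * s = X := by
      rw [hY]
      calc s * (i * X * i) * s = (s * i) * X * (i * s) := by simp only [mul_assoc]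
        _ = X := by rw [h1, h2, one_mul, mul_one]
    show s * S * s - X = s * (S - Y) * s
    rw [mul_sub, sub_mul, hsys]
  rw [hfin]
  have := hZY.mul_mul_conjTranspose_same s
  rwa [hsh.eq] at this


section smul
variable {m : Type*} [Fintype m] [DecidableEq m]

lemma rsmul_eq_csmul (l : ℝ) (M : Matrix m m ℂ) : l • M = (l : ℂ) • M := by
  ext i j
  simp [Complex.real_smul]

lemma herm_rsmul (l : ℝ) {M : Matrix m m ℂ} (hM : M.IsHermitian) : (l • M).IsHermitian := by
  rw [rsmul_eq_csmul]
  show ((l : ℂ) • M)ᴴ = (l : ℂ) • M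
  rw [conjTranspose_smul, hM.eq]
  congr 1
  simp

lemma psd_rsmul {l : ℝ} (hl : 0 ≤ l) {M : Matrix m m ℂ} (hM : M.PosSemidef) :
    (l • M).PosSemidef := by
  refine .of_dotProduct_mulVec_nonneg (herm_rsmul l hM.1) fun x => ?_
  rw [rsmul_eq_csmul, smul_mulVec, dotProduct_smul, smul_eq_mul]
  exact mul_nonneg (by exact_mod_cast hl) (hM.dotProduct_mulVec_nonneg x)

lemma posdef_rsmul {l : ℝ} (hl : 0 < l) {M : Matrix m m ℂ} (hM : M.PosDef) :
    (l • M).PosDef := by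
  refine .of_dotProduct_mulVec_pos (herm_rsmul l hM.1) fun x hx => ?_
  rw [rsmul_eq_csmul, smul_mulVec, dotProduct_smul, smul_eq_mul]
  exact mul_pos (by exact_mod_cast hl) (hM.dotProduct_mulVec_pos hx)

lemma posdef_convex {l : ℝ} (hl : l ∈ Set.Icc (0:ℝ) 1) {M N : Matrix m m ℂ}
    (hM : M.PosDef) (hN : N.PosDef) : (l • M + (1 - l) • N).PosDef := by
  rcases eq_or_lt_of_le hl.1 with h | h
  · rw [← h]
    simpa using hN
  · exact (posdef_rsmul h hM).add_posSemidef (psd_rsmul (by linarith [hl.2]) hN.posSemidef)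

end smul

end GeomMeanAux

open GeomMeanAux

/-- The geometric operator mean is jointly concave on pairs of positive definite
matrices, in the Loewner order. -/
theorem geomMean_jointly_concave {n : ℕ}
    (A₁ A₂ B₁ B₂ : Matrix (Fin n) (Fin n) ℂ)
    (hA₁ : A₁.PosDef) (hA₂ : A₂.PosDef) (hB₁ : B₁.PosDef) (hB₂ : B₂.PosDef)
    (l : ℝ) (hl : l ∈ Set.Icc (0 : ℝ) 1) :
    (Matrix.geomMean (l • A₁ + (1 - l) • A₂) (l • B₁ + (1 - l) • B₂) -
      (l • Matrix.geomMean A₁ B₁ + (1 - l) • Matrix.geomMean A₂ B₂)).PosSemidef := by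
  have hl' : (0:ℝ) ≤ 1 - l := by linarith [hl.2]
  set A := l • A₁ + (1 - l) • A₂ with hA
  set B := l • B₁ + (1 - l) • B₂ with hB
  set X := l • Matrix.geomMean A₁ B₁ + (1 - l) • Matrix.geomMean A₂ B₂ with hX
  have hApd : A.PosDef := posdef_convex hl hA₁ hA₂
  have hBpd : B.PosDef := posdef_convex hl hB₁ hB₂
  have hXh : X.IsHermitian :=
    (herm_rsmul l geomMean_herm).add (herm_rsmul (1 - l) geomMean_herm)
  have hbl : (Matrix.fromBlocks A X X B).PosSemidef := by
    have e : Matrix.fromBlocks A X X B =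
        l • Matrix.fromBlocks A₁ (Matrix.geomMean A₁ B₁) (Matrix.geomMean A₁ B₁) B₁ +
        (1 - l) • Matrix.fromBlocks A₂ (Matrix.geomMean A₂ B₂) (Matrix.geomMean A₂ B₂) B₂ := by
      rw [Matrix.fromBlocks_smul, Matrix.fromBlocks_smul, Matrix.fromBlocks_add]
    rw [e]
    exact (psd_rsmul hl.1 (block_psd hA₁ hB₁)).add (psd_rsmul hl' (block_psd hA₂ hB₂))
  exact le_geomMean hApd hBpd hXh hbl
end

section
/- Let H be an infinite-dimensional complex Hilbert space and let F be a map from pairs of positive semidefinite bounded operators on H into the bounded operators on H satisfying: F(u*Au, u*Bu) = u*F(A,B)u for every unitary u on H; F(pAp + qAq, pBp + qBq) = pF(pAp, pBp)p + qF(qAq, qBq)q for orthogonal projections p, q with pq = 0; and F(tA, tB) = t F(A,B) for t > 0. Let f: (0,∞) → ℝ be the function determined by F(1, t·1) = f(t)·1. Then for every positive semidefinite operator A with finite spectral decomposition A = Σ_{i=1}^n λ_i P_i, where λ_i > 0 and P₁, …, P_n are mutually orthogonal projections summing to the identity, one has F(1, A) = f(A) = Σ_{i=1}^n f(λ_i)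 P_i. -/
set_option synthInstance.maxHeartbeats 1000000
set_option maxHeartbeats 1000000

section Aux
variable {H : Type*} [NormedAddCommGroup H] [InnerProductSpace ℂ H] [CompleteSpace H]

lemma sandwich (e p X : H →L[ℂ] H) (hep : e * p = p) (hpe : p * e = p) :
    e * (p * X * p) * e = p * X * p := by
  simp only [← mul_assoc]
  rw [hep, mul_assoc, hpe]

lemma smul_proj_nonneg' (t : ℝ) (ht : 0 ≤ t) (p : H →L[ℂ] H)
    (hp : IsIdempotentElem p) (hsa : IsSelfAdjoint p) : 0 ≤ t • p := by
  have key : t • p = star (Real.sqrt t • p) * (Real.sqrt t • p) := by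
    rw [star_smul, star_trivial, hsa.star_eq, smul_mul_smul_comm, hp.eq,
      Real.mul_self_sqrt ht]
  rw [key]; exact star_mul_self_nonneg _

lemma main_lemma (F : (H →L[ℂ] H) → (H →L[ℂ] H) → (H →L[ℂ] H))
    (hreg₂ : ∀ p q : H →L[ℂ] H, IsIdempotentElem p → IsSelfAdjoint p →
      IsIdempotentElem q → IsSelfAdjoint q → p * q = 0 →
      ∀ A B : H →L[ℂ] H, 0 ≤ A → 0 ≤ B →
        F (p * A * p + q * A * q) (p * B * p + q * B * q) =
          p * F (p * A * p) (p * B * p) * p + q * F (q * A * q) (q * B * q) * q)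
    (f : ℝ → ℝ)
    (hf : ∀ t : ℝ, 0 < t → F 1 (t • (1 : H →L[ℂ] H)) = f t • (1 : H →L[ℂ] H)) :
    ∀ (n : ℕ) (lam : Fin n → ℝ) (P : Fin n → (H →L[ℂ] H)) (e : H →L[ℂ] H),
      (∀ i, 0 < lam i) → (∀ i, IsIdempotentElem (P i) ∧ IsSelfAdjoint (P i)) →
      (∀ i j, i ≠ j → P i * P j = 0) → (∑ i, P i = e) →
      e * F e (∑ i, lam i • P i) * e = ∑ i, f (lam i) • P i := by
  -- key lemma
  have key : ∀ (p : H →L[ℂ] H), IsIdempotentElem p → IsSelfAdjoint p →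
      ∀ t : ℝ, 0 < t → p * F p (t • p) * p = f t • p := by
    intro p hp hsa t ht
    set q : H →L[ℂ] H := 1 - p with hq
    have hq_idem : IsIdempotentElem q := hp.one_sub
    have hq_sa : IsSelfAdjoint q := (IsSelfAdjoint.one _).sub hsa
    have hpq : p * q = 0 := by simp [hq, mul_sub, hp.eq]
    have hqp : q * p = 0 := by simp [hq, sub_mul, hp.eq]
    have h := hreg₂ p q hp hsa hq_idem hq_sa hpq 1 (t • 1) zero_le_one
      (smul_proj_nonneg' t ht.le 1 IsIdempotentElem.one (IsSelfAdjoint.one _))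
    have e1 : p * (1 : H →L[ℂ] H) * p = p := by rw [mul_one, hp.eq]
    have e2 : q * (1 : H →L[ℂ] H) * q = q := by rw [mul_one, hq_idem.eq]
    have e3 : p * (t • (1 : H →L[ℂ] H)) * p = t • p := by
      rw [mul_smul_comm, mul_one, smul_mul_assoc, hp.eq]
    have e4 : q * (t • (1 : H →L[ℂ] H)) * q = t • q := by
      rw [mul_smul_comm, mul_one, smul_mul_assoc, hq_idem.eq]
    rw [e1, e2, e3, e4] at h
    have epq : p + q = 1 := by simp [hq]
    have etpq : t • p + t • q = t • (1 : H →L[ℂ] H) := by rw [← smul_add, epq]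
    rw [epq, etpq, hf t ht] at h
    have h' := congrArg (fun X => p * X * p) h
    simp only [mul_add, add_mul] at h'
    have hl : p * (f t • (1 : H →L[ℂ] H)) * p = f t • p := by
      rw [mul_smul_comm, mul_one, smul_mul_assoc, hp.eq]
    have h1 : p * (p * F p (t • p) * p) * p = p * F p (t • p) * p := by
      simp only [← mul_assoc]
      rw [hp.eq, mul_assoc, hp.eq]
    have h2 : p * (q * F q (t • q) * q) * p = 0 := by
      simp only [← mul_assoc]
      rw [hpq, zero_mul, zero_mul, zero_mul]
    rw [hl, h1, h2, add_zero] at h'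
    exact h'.symm
  intro n
  induction n with
  | zero =>
    intro lam P e _ _ _ hsum
    have he : e = 0 := by simpa using hsum.symm
    simp [he]
  | succ n ih =>
    intro lam P e hlam hproj horth hsum
    set p : H →L[ℂ] H := P 0 with hpdef
    set q : H →L[ℂ] H := ∑ i : Fin n, P i.succ with hqdef
    have hp : IsIdempotentElem p := (hproj 0).1
    have hpsa : IsSelfAdjoint p := (hproj 0).2
    have hPq : ∀ i : Fin n, P i.succ * q = P i.succ := by
      intro i
      rw [hqdef, Finset.mul_sum]
      rw [Finset.sum_eq_single i]
      · exact (hproj i.succ).1.eq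
      · intro j _ hj
        exact horth i.succ j.succ (fun h => hj (Fin.succ_injective _ h).symm)
      · intro h; exact absurd (Finset.mem_univ i) h
    have hqP : ∀ i : Fin n, q * P i.succ = P i.succ := by
      intro i
      rw [hqdef, Finset.sum_mul]
      rw [Finset.sum_eq_single i]
      · exact (hproj i.succ).1.eq
      · intro j _ hj
        exact horth j.succ i.succ (fun h => hj (Fin.succ_injective _ h))
      · intro h; exact absurd (Finset.mem_univ i) h
    have hq_idem : IsIdempotentElem q := by
      show q * q = q
      rw [hqdef, Finset.sum_mul]
      simp only [← hqdef, hPq]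
    have hq_sa : IsSelfAdjoint q := by
      show star q = q
      rw [hqdef, star_sum]
      exact Finset.sum_congr rfl fun i _ => (hproj i.succ).2.star_eq
    have hpq : p * q = 0 := by
      rw [hqdef, Finset.mul_sum]
      refine Finset.sum_eq_zero fun i _ => horth 0 i.succ (Fin.succ_ne_zero i).symm
    have hqp : q * p = 0 := by
      rw [hqdef, Finset.sum_mul]
      refine Finset.sum_eq_zero fun i _ => horth i.succ 0 (Fin.succ_ne_zero i)
    have hpqe : p + q = e := by rw [← hsum, Fin.sum_univ_succ]
    set A' : H →L[ℂ] H := ∑ i : Fin n, lam i.succ • P i.succ with hA'def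
    have hAsplit : (∑ i : Fin (n+1), lam i • P i) = lam 0 • p + A' := by
      rw [Fin.sum_univ_succ]
    have hA_nonneg : 0 ≤ ∑ i : Fin (n+1), lam i • P i :=
      Finset.sum_nonneg fun i _ =>
        smul_proj_nonneg' (lam i) (hlam i).le (P i) (hproj i).1 (hproj i).2
    have h := hreg₂ p q hp hpsa hq_idem hq_sa hpq 1 (∑ i : Fin (n+1), lam i • P i)
      zero_le_one hA_nonneg
    have e1 : p * (1 : H →L[ℂ] H) * p = p := by rw [mul_one, hp.eq]
    have e2 : q * (1 : H →L[ℂ] H) * q = q := by rw [mul_one, hq_idem.eq]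
    have e3 : p * (∑ i : Fin (n+1), lam i • P i) * p = lam 0 • p := by
      rw [hAsplit, mul_add, add_mul]
      have t1 : p * (lam 0 • p) * p = lam 0 • p := by
        rw [mul_smul_comm, smul_mul_assoc, hp.eq, hp.eq]
      have t2 : p * A' * p = 0 := by
        have : p * A' = 0 := by
          rw [hA'def, Finset.mul_sum]
          refine Finset.sum_eq_zero fun i _ => ?_
          rw [mul_smul_comm, horth 0 i.succ (Fin.succ_ne_zero i).symm, smul_zero]
        rw [this, zero_mul]
      rw [t1, t2, add_zero]
    have e4 : q * (∑ i : Fin (n+1), lam i • P i) * q = A' := by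
      rw [hAsplit, mul_add, add_mul]
      have t1 : q * (lam 0 • p) * q = 0 := by
        rw [mul_smul_comm, hqp, smul_zero, zero_mul]
      have hqA : q * A' = A' := by
        rw [hA'def, Finset.mul_sum]
        exact Finset.sum_congr rfl fun i _ => by rw [mul_smul_comm, hqP]
      have hA'q : A' * q = A' := by
        conv_lhs => rw [hA'def, Finset.sum_mul]
        rw [hA'def]
        exact Finset.sum_congr rfl fun i _ => by rw [smul_mul_assoc, hPq]
      have t2 : q * A' * q = A' := by rw [hqA, hA'q]
      rw [t1, t2, zero_add]
    rw [e1, e2, e3, e4, hpqe] at h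
    -- h : F e (∑ lam i • P i) = p * F p (lam 0 • p) * p + q * F q A' * q
    have hep : e * p = p := by rw [← hpqe, add_mul, hp.eq, hqp, add_zero]
    have hpe : p * e = p := by rw [← hpqe, mul_add, hp.eq, hpq, add_zero]
    have heq : e * q = q := by rw [← hpqe, add_mul, hq_idem.eq, hpq, zero_add]
    have hqe : q * e = q := by rw [← hpqe, mul_add, hq_idem.eq, hqp, zero_add]
    rw [hAsplit, h, mul_add, add_mul, sandwich e p _ hep hpe, sandwich e q _ heq hqe]
    rw [key p hp hpsa (lam 0) (hlam 0)]
    rw [ih (fun i => lam i.succ) (fun i => P i.succ) q (fun i => hlam i.succ)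
      (fun i => hproj i.succ)
      (fun i j hij => horth i.succ j.succ (fun h => hij (Fin.succ_injective _ h)))
      hqdef.symm]
    rw [Fin.sum_univ_succ]
end Aux


/-- For a regular, positively homogeneous map `F` on pairs of positive semidefinite
operators on an infinite-dimensional Hilbert space, with `f` determined by
`F(1, t·1) = f(t)·1`, one has `F(1, A) = f(A) = Σ f(λᵢ) Pᵢ` for every positive
operator with finite spectral decomposition `A = Σ λᵢ Pᵢ`. -/
theorem F_one_eq_funcCalc {H : Type*} [NormedAddCommGroup H] [InnerProductSpace ℂ H]
    [CompleteSpace H] (hinf : ¬ FiniteDimensional ℂ H)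
    (F : (H →L[ℂ] H) → (H →L[ℂ] H) → (H →L[ℂ] H))
    (hreg₁ : ∀ A B : H →L[ℂ] H, 0 ≤ A → 0 ≤ B → ∀ u ∈ unitary (H →L[ℂ] H),
      F (star u * A * u) (star u * B * u) = star u * F A B * u)
    (hreg₂ : ∀ p q : H →L[ℂ] H, IsIdempotentElem p → IsSelfAdjoint p →
      IsIdempotentElem q → IsSelfAdjoint q → p * q = 0 →
      ∀ A B : H →L[ℂ] H, 0 ≤ A → 0 ≤ B →
        F (p * A * p + q * A * q) (p * B * p + q * B * q) =
          p * F (p * A * p) (p * B * p) * p + q * F (q * A * q) (q * B * q) * q)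
    (hhom : ∀ A B : H →L[ℂ] H, 0 ≤ A → 0 ≤ B → ∀ t : ℝ, 0 < t →
      F (t • A) (t • B) = t • F A B)
    (f : ℝ → ℝ)
    (hf : ∀ t : ℝ, 0 < t → F 1 (t • (1 : H →L[ℂ] H)) = f t • (1 : H →L[ℂ] H))
    (n : ℕ) (lam : Fin n → ℝ) (P : Fin n → (H →L[ℂ] H)) (A : H →L[ℂ] H)
    (hlam : ∀ i, 0 < lam i)
    (hproj : ∀ i, IsIdempotentElem (P i) ∧ IsSelfAdjoint (P i))
    (horth : ∀ i j, i ≠ j → P i * P j = 0)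
    (hsum : ∑ i, P i = (1 : H →L[ℂ] H))
    (hA : A = ∑ i, lam i • P i) :
    F 1 A = ∑ i, f (lam i) • P i := by
  have h := main_lemma F hreg₂ f hf n lam P 1 hlam hproj horth hsum
  rw [← hA, one_mul, mul_one] at h
  exact h
end

section
/- If a real function f defined on an interval I is mid-point operator convex, i.e. f((X+Y)/2) ≤ (f(X) + f(Y))/2 in the Loewner order for all Hermitian matrices X, Y (of every size) with spectra in I, then f is operator convex: f(λX + (1−λ)Y) ≤ λ f(X) + (1−λ) f(Y) for all such X, Y and all λ ∈ [0,1]. No continuity assumption on f is required. -/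
open scoped ComplexOrder
open Matrix Polynomial



variable {k : Type*} [Fintype k] [DecidableEq k]

/-- Conjugation by an element with two-sided star inverse, as an `ℝ`-algebra hom. -/
noncomputable def conjAlgHom (u : Matrix k k ℂ) (hu : u * star u = 1) (hu' : star u * u = 1) :
    Matrix k k ℂ →ₐ[ℝ] Matrix k k ℂ where
  toFun x := u * x * star u
  map_one' := by show u * 1 * star u = 1; rw [mul_one, hu]
  map_mul' x y := by
    simp only [mul_assoc]
    rw [← mul_assoc (star u) u, hu', one_mul]
  map_zero' := by show u * 0 * star u = 0; rw [mul_zero, zero_mul]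
  map_add' x y := by show u * (x + y) * star u = _; rw [mul_add, add_mul]
  commutes' r := by
    show u * algebraMap ℝ _ r * star u = _
    rw [show u * algebraMap ℝ _ r = algebraMap ℝ _ r * u from (Algebra.commutes r u).symm,
      mul_assoc, hu, mul_one]

lemma aeval_conj (u : Matrix k k ℂ) (hu : u * star u = 1) (hu' : star u * u = 1)
    (M : Matrix k k ℂ) (p : ℝ[X]) :
    aeval (u * M * star u) p = u * aeval M p * star u :=
  aeval_algHom_apply (conjAlgHom u hu hu') M p

/-- The block-diagonal embedding as an `ℝ`-algebra hom. -/
noncomputable def blockDiagAlgHom :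
    (Matrix k k ℂ × Matrix k k ℂ) →ₐ[ℝ] Matrix (k ⊕ k) (k ⊕ k) ℂ where
  toFun P := fromBlocks P.1 0 0 P.2
  map_one' := fromBlocks_one
  map_mul' P Q := by simp [fromBlocks_multiply]
  map_zero' := by ext (i | i) (j | j) <;> simp
  map_add' P Q := by simp [fromBlocks_add]
  commutes' r := by
    ext (i | i) (j | j) <;>
      simp [Matrix.algebraMap_eq_diagonal, diagonal, fromBlocks]

lemma aeval_blockDiag (X Y : Matrix k k ℂ) (p : ℝ[X]) :
    aeval (fromBlocks X 0 0 Y) p = fromBlocks (aeval X p) 0 0 (aeval Y p) := by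
  have h1 : aeval ((X, Y) : Matrix k k ℂ × Matrix k k ℂ) p = (aeval X p, aeval Y p) := by
    refine Prod.ext ?_ ?_
    · exact (aeval_algHom_apply (AlgHom.fst ℝ _ _) (X, Y) p).symm
    · exact (aeval_algHom_apply (AlgHom.snd ℝ _ _) (X, Y) p).symm
  have h2 := aeval_algHom_apply (blockDiagAlgHom (k := k)) (X, Y) p
  rw [h1] at h2
  exact h2.symm ▸ rfl


variable {k : Type*} [Fintype k] [DecidableEq k]

lemma cfc_eq_aeval (M : Matrix k k ℂ) (hM : M.IsHermitian) (p : ℝ[X]) (f : ℝ → ℝ)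
    (h : ∀ x ∈ spectrum ℝ M, f x = p.eval x) : cfc f M = aeval M p := by
  rw [← cfc_polynomial p M hM.isSelfAdjoint]
  exact cfc_congr h

lemma spectrum_fromBlocks_subset (X Y : Matrix k k ℂ) :
    spectrum ℝ (fromBlocks X 0 0 Y) ⊆ spectrum ℝ X ∪ spectrum ℝ Y := by
  intro x hx
  by_contra h
  obtain ⟨h1, h2⟩ := not_or.mp h
  replace h1 : x ∉ spectrum ℝ X := h1
  replace h2 : x ∉ spectrum ℝ Y := h2
  rw [spectrum.notMem_iff] at h1 h2
  rw [spectrum.mem_iff] at hx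
  apply hx
  obtain ⟨P, hP1, hP2⟩ := isUnit_iff_exists.mp h1
  obtain ⟨Q, hQ1, hQ2⟩ := isUnit_iff_exists.mp h2
  have halg : algebraMap ℝ (Matrix (k ⊕ k) (k ⊕ k) ℂ) x - fromBlocks X 0 0 Y
      = fromBlocks (algebraMap ℝ (Matrix k k ℂ) x - X) 0 0 (algebraMap ℝ (Matrix k k ℂ) x - Y) := by
    ext (i | i) (j | j) <;>
      simp [Matrix.algebraMap_eq_diagonal, diagonal, fromBlocks, Matrix.sub_apply]
  rw [halg]
  exact isUnit_iff_exists.mpr ⟨fromBlocks P 0 0 Q,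
    by rw [fromBlocks_multiply]; simp [hP1, hQ1, fromBlocks_one],
    by rw [fromBlocks_multiply]; simp [hP2, hQ2, fromBlocks_one]⟩


variable {k : Type*} [Fintype k] [DecidableEq k]

noncomputable def rotU (c s : ℝ) : Matrix (k ⊕ k) (k ⊕ k) ℂ :=
  fromBlocks (c • 1) (-(s • 1)) (s • 1) (c • 1)

noncomputable def matV : Matrix (k ⊕ k) (k ⊕ k) ℂ :=
  fromBlocks 1 0 0 (-1)

lemma star_rotU (c s : ℝ) :
    star (rotU (k := k) c s) = fromBlocks (c • 1) (s • 1) (-(s • 1)) (c • 1) := by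
  simp [rotU, star_eq_conjTranspose, fromBlocks_conjTranspose]

lemma rotU_unitary (c s : ℝ) (hcs : c * c + s * s = 1) :
    rotU (k := k) c s * star (rotU (k := k) c s) = 1 ∧
      star (rotU (k := k) c s) * rotU (k := k) c s = 1 := by
  rw [star_rotU, rotU]
  constructor <;>
  · rw [fromBlocks_multiply, ← fromBlocks_one]
    apply fromBlocks_inj.mpr
    refine ⟨?_, ?_, ?_, ?_⟩ <;>
      simp [smul_smul, smul_mul_assoc, mul_smul_comm, ← add_smul, hcs, mul_comm,
        ← sub_smul, sub_self]
    rw [add_comm (s * s), hcs, one_smul]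

lemma rot_conj (c s : ℝ) (P Q : Matrix k k ℂ) :
    rotU (k := k) c s * fromBlocks P 0 0 Q * star (rotU (k := k) c s) =
    fromBlocks ((c * c) • P + (s * s) • Q) ((c * s) • P - (c * s) • Q)
      ((c * s) • P - (c * s) • Q) ((s * s) • P + (c * c) • Q) := by
  rw [star_rotU, rotU, fromBlocks_multiply, fromBlocks_multiply]
  apply fromBlocks_inj.mpr
  refine ⟨?_, ?_, ?_, ?_⟩ <;>
    · simp [smul_smul, smul_mul_assoc, mul_smul_comm, sub_eq_add_neg]
      first
        | rfl
        | rw [mul_comm]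
        | skip

lemma star_matV : star (matV (k := k)) = matV := by
  simp [matV, star_eq_conjTranspose, fromBlocks_conjTranspose]

lemma V_conj (A B C D : Matrix k k ℂ) :
    matV (k := k) * fromBlocks A B C D * star (matV (k := k)) =
    fromBlocks A (-B) (-C) D := by
  rw [star_matV, matV, fromBlocks_multiply, fromBlocks_multiply]
  apply fromBlocks_inj.mpr
  refine ⟨?_, ?_, ?_, ?_⟩ <;> simp

lemma key_calc (l c s : ℝ) (hc : c * c = l) (hs : s * s = 1 - l) (P Q : Matrix k k ℂ) :
    (2 : ℝ)⁻¹ • (rotU (k := k) c s * fromBlocks P 0 0 Q * star (rotU (k := k) c s)) +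
      (2 : ℝ)⁻¹ • (matV (k := k) *
        (rotU (k := k) c s * fromBlocks P 0 0 Q * star (rotU (k := k) c s)) *
        star (matV (k := k))) =
    fromBlocks (l • P + (1 - l) • Q) 0 0 ((1 - l) • P + l • Q) := by
  rw [rot_conj, V_conj, fromBlocks_smul, fromBlocks_smul, fromBlocks_add, hc, hs]
  apply fromBlocks_inj.mpr
  refine ⟨?_, ?_, ?_, ?_⟩ <;> module


section Main

lemma matV_mul_self {k : Type*} [Fintype k] [DecidableEq k] :
    matV (k := k) * matV (k := k) = 1 := by
  rw [matV, fromBlocks_multiply, ← fromBlocks_one]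
  apply fromBlocks_inj.mpr
  refine ⟨?_, ?_, ?_, ?_⟩ <;> simp

lemma isHermitian_real_smul {k : Type*} [Fintype k] [DecidableEq k]
    {M : Matrix k k ℂ} (h : M.IsHermitian) (r : ℝ) : (r • M).IsHermitian := by
  rw [Matrix.IsHermitian, Matrix.conjTranspose_smul, star_trivial, h.eq]

/-- A mid-point operator convex function on an interval `I` is operator convex;
no continuity assumption on `f` is required.  Matrices of every size are
considered, with `f` applied via the functional calculus for Hermitian matrices
and inequalities in the Loewner order. -/
theorem midpoint_operatorConvex_implies_operatorConvex
    (I : Set ℝ) (hI : I.OrdConnected) (f : ℝ → ℝ)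
    (hmid : ∀ (n : ℕ) (X Y : Matrix (Fin n) (Fin n) ℂ), X.IsHermitian → Y.IsHermitian →
      (∀ x ∈ spectrum ℝ X, x ∈ I) → (∀ x ∈ spectrum ℝ Y, x ∈ I) →
      ((2 : ℝ)⁻¹ • cfc f X + (2 : ℝ)⁻¹ • cfc f Y -
        cfc f ((2 : ℝ)⁻¹ • X + (2 : ℝ)⁻¹ • Y)).PosSemidef) :
    ∀ (n : ℕ) (X Y : Matrix (Fin n) (Fin n) ℂ), X.IsHermitian → Y.IsHermitian →
      (∀ x ∈ spectrum ℝ X, x ∈ I) → (∀ x ∈ spectrum ℝ Y, x ∈ I) →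
      ∀ l : ℝ, l ∈ Set.Icc (0 : ℝ) 1 →
        (l • cfc f X + (1 - l) • cfc f Y - cfc f (l • X + (1 - l) • Y)).PosSemidef := by
  intro n X Y hX hY hXI hYI l hl
  obtain ⟨hl0, hl1⟩ := hl
  set c : ℝ := Real.sqrt l with hcdef
  set s : ℝ := Real.sqrt (1 - l) with hsdef
  have hc : c * c = l := Real.mul_self_sqrt hl0
  have hs : s * s = 1 - l := Real.mul_self_sqrt (by linarith)
  set Z1 : Matrix (Fin n) (Fin n) ℂ := l • X + (1 - l) • Y with hZ1def
  set Z2 : Matrix (Fin n) (Fin n) ℂ := (1 - l) • X + l • Y with hZ2def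
  have hZ1 : Z1.IsHermitian := (isHermitian_real_smul hX l).add (isHermitian_real_smul hY (1 - l))
  have hZ2 : Z2.IsHermitian := (isHermitian_real_smul hX (1 - l)).add (isHermitian_real_smul hY l)
  -- block matrices
  set A : Matrix (Fin n ⊕ Fin n) (Fin n ⊕ Fin n) ℂ := fromBlocks X 0 0 Y with hAdef
  set U : Matrix (Fin n ⊕ Fin n) (Fin n ⊕ Fin n) ℂ := rotU c s with hUdef
  set V : Matrix (Fin n ⊕ Fin n) (Fin n ⊕ Fin n) ℂ := matV with hVdef
  obtain ⟨hU1, hU2⟩ := rotU_unitary (k := Fin n) c s (by rw [hc, hs]; ring)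
  have hVst : star V = V := star_matV
  have hV1 : V * star V = 1 := by rw [hVst]; exact matV_mul_self
  have hV2 : star V * V = 1 := by rw [hVst]; exact matV_mul_self
  set B : Matrix (Fin n ⊕ Fin n) (Fin n ⊕ Fin n) ℂ := U * A * star U with hBdef
  set C : Matrix (Fin n ⊕ Fin n) (Fin n ⊕ Fin n) ℂ := V * B * star V with hCdef
  have hA : A.IsHermitian := hX.fromBlocks (by simp) hY
  have hB : B.IsHermitian := by
    rw [hBdef, Matrix.star_eq_conjTranspose]
    exact isHermitian_mul_mul_conjTranspose U hA
  have hCherm : C.IsHermitian := by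
    rw [hCdef, Matrix.star_eq_conjTranspose]
    exact isHermitian_mul_mul_conjTranspose V hB
  -- spectra
  have hAspec : spectrum ℝ A ⊆ spectrum ℝ X ∪ spectrum ℝ Y := spectrum_fromBlocks_subset X Y
  have uU : U ∈ unitary (Matrix (Fin n ⊕ Fin n) (Fin n ⊕ Fin n) ℂ) :=
    Unitary.mem_iff.mpr ⟨hU2, hU1⟩
  have uV : V ∈ unitary (Matrix (Fin n ⊕ Fin n) (Fin n ⊕ Fin n) ℂ) :=
    Unitary.mem_iff.mpr ⟨hV2, hV1⟩
  have hBspec : spectrum ℝ B = spectrum ℝ A := by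
    have := Unitary.spectrum_star_right_conjugate (R := ℝ) (a := A) (U := ⟨U, uU⟩)
    simpa [Unitary.coe_star] using this
  have hCspec : spectrum ℝ C = spectrum ℝ B := by
    have := Unitary.spectrum_star_right_conjugate (R := ℝ) (a := B) (U := ⟨V, uV⟩)
    simpa [Unitary.coe_star] using this
  -- Lagrange interpolation of f on all relevant spectra
  have hfin : ((spectrum ℝ X ∪ spectrum ℝ Y) ∪ (spectrum ℝ Z1 ∪ spectrum ℝ Z2)).Finite :=
    (((Matrix.finite_real_spectrum (A := X)).union (Matrix.finite_real_spectrum (A := Y))).union ((Matrix.finite_real_spectrum (A := Z1)).union (Matrix.finite_real_spectrum (A := Z2))))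
  set S : Finset ℝ := hfin.toFinset with hSdef
  set p : ℝ[X] := Lagrange.interpolate S id f with hpdef
  have hp : ∀ x ∈ (S : Finset ℝ), f x = p.eval x := by
    intro x hx
    rw [hpdef]
    exact (Lagrange.eval_interpolate_at_node f (Set.injOn_id _) hx).symm
  have hmemXY : ∀ x ∈ spectrum ℝ X ∪ spectrum ℝ Y, x ∈ S :=
    fun x hx => hfin.mem_toFinset.mpr (Or.inl hx)
  have hmemZ : ∀ x ∈ spectrum ℝ Z1 ∪ spectrum ℝ Z2, x ∈ S :=
    fun x hx => hfin.mem_toFinset.mpr (Or.inr hx)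
  -- cfc = aeval p on all our matrices
  have hcfcX : cfc f X = aeval X p :=
    cfc_eq_aeval X hX p f fun x hx => hp x (hmemXY x (Or.inl hx))
  have hcfcY : cfc f Y = aeval Y p :=
    cfc_eq_aeval Y hY p f fun x hx => hp x (hmemXY x (Or.inr hx))
  have hcfcZ1 : cfc f Z1 = aeval Z1 p :=
    cfc_eq_aeval Z1 hZ1 p f fun x hx => hp x (hmemZ x (Or.inl hx))
  have hcfcZ2 : cfc f Z2 = aeval Z2 p :=
    cfc_eq_aeval Z2 hZ2 p f fun x hx => hp x (hmemZ x (Or.inr hx))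
  -- reindexing to Fin (n + n)
  set e : Fin n ⊕ Fin n ≃ Fin (n + n) := finSumFinEquiv with hedef
  set ρ : Matrix (Fin n ⊕ Fin n) (Fin n ⊕ Fin n) ℂ ≃ₐ[ℝ] Matrix (Fin (n + n)) (Fin (n + n)) ℂ :=
    Matrix.reindexAlgEquiv ℝ ℂ e with hρdef
  have hρapp : ∀ M : Matrix (Fin n ⊕ Fin n) (Fin n ⊕ Fin n) ℂ,
      ρ M = M.submatrix e.symm e.symm := fun M => rfl
  have hρherm : ∀ M : Matrix (Fin n ⊕ Fin n) (Fin n ⊕ Fin n) ℂ, M.IsHermitian →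
      (ρ M).IsHermitian := fun M hM => by rw [hρapp]; exact hM.submatrix _
  have hρspec : ∀ M : Matrix (Fin n ⊕ Fin n) (Fin n ⊕ Fin n) ℂ,
      spectrum ℝ (ρ M) = spectrum ℝ M := fun M => AlgEquiv.spectrum_eq ρ M
  -- apply the midpoint hypothesis
  have hmain := hmid (n + n) (ρ B) (ρ C) (hρherm B hB) (hρherm C hCherm)
    (by rw [hρspec, hBspec]; intro x hx
        rcases hAspec hx with h | h
        exacts [hXI x h, hYI x h])
    (by rw [hρspec, hCspec, hBspec]; intro x hx
        rcases hAspec hx with h | h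
        exacts [hXI x h, hYI x h])
  -- rewrite the three cfc terms
  set G : Matrix (Fin n ⊕ Fin n) (Fin n ⊕ Fin n) ℂ := fromBlocks (cfc f X) 0 0 (cfc f Y) with hGdef
  have haevalA : aeval A p = G := by
    rw [hAdef, aeval_blockDiag, hGdef, hcfcX, hcfcY]
  have e1 : cfc f (ρ B) = ρ (U * G * star U) := by
    rw [cfc_eq_aeval (ρ B) (hρherm B hB) p f
      (fun x hx => hp x (hmemXY x (hAspec (hBspec ▸ (hρspec B ▸ hx)))))]
    rw [aeval_algHom_apply ρ B p]
    rw [hBdef, aeval_conj U hU1 hU2 A p, haevalA]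
  have e2 : cfc f (ρ C) = ρ (V * (U * G * star U) * star V) := by
    rw [cfc_eq_aeval (ρ C) (hρherm C hCherm) p f
      (fun x hx => hp x (hmemXY x (hAspec (hBspec ▸ (hCspec ▸ (hρspec C ▸ hx))))))]
    rw [aeval_algHom_apply ρ C p]
    rw [hCdef, aeval_conj V hV1 hV2 B p, hBdef, aeval_conj U hU1 hU2 A p, haevalA]
  have hBC : (2 : ℝ)⁻¹ • B + (2 : ℝ)⁻¹ • C = fromBlocks Z1 0 0 Z2 := by
    rw [hCdef, hBdef, hAdef, hUdef, hVdef]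
    exact key_calc l c s hc hs X Y
  have e3 : (2 : ℝ)⁻¹ • ρ B + (2 : ℝ)⁻¹ • ρ C = ρ (fromBlocks Z1 0 0 Z2) := by
    rw [← hBC, map_add, _root_.map_smul, _root_.map_smul]
  have e4 : cfc f ((2 : ℝ)⁻¹ • ρ B + (2 : ℝ)⁻¹ • ρ C)
      = ρ (fromBlocks (cfc f Z1) 0 0 (cfc f Z2)) := by
    rw [e3]
    have hDh : (fromBlocks Z1 0 0 Z2).IsHermitian := hZ1.fromBlocks (by simp) hZ2
    rw [cfc_eq_aeval _ (hρherm _ hDh) p f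
      (fun x hx => hp x (hmemZ x (spectrum_fromBlocks_subset Z1 Z2 ((hρspec _) ▸ hx))))]
    rw [aeval_algHom_apply ρ _ p]
    rw [aeval_blockDiag, hcfcZ1, hcfcZ2]
  rw [e1, e2, e4] at hmain
  have hGcalc : (2 : ℝ)⁻¹ • (U * G * star U) + (2 : ℝ)⁻¹ • (V * (U * G * star U) * star V)
      = fromBlocks (l • cfc f X + (1 - l) • cfc f Y) 0 0
          ((1 - l) • cfc f X + l • cfc f Y) := by
    rw [hGdef, hUdef, hVdef]
    exact key_calc l c s hc hs (cfc f X) (cfc f Y)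
  have hmain2 : (ρ (fromBlocks (l • cfc f X + (1 - l) • cfc f Y - cfc f Z1) 0 0
      ((1 - l) • cfc f X + l • cfc f Y - cfc f Z2))).PosSemidef := by
    have : (2 : ℝ)⁻¹ • ρ (U * G * star U) + (2 : ℝ)⁻¹ • ρ (V * (U * G * star U) * star V)
        - ρ (fromBlocks (cfc f Z1) 0 0 (cfc f Z2))
        = ρ (fromBlocks (l • cfc f X + (1 - l) • cfc f Y - cfc f Z1) 0 0
            ((1 - l) • cfc f X + l • cfc f Y - cfc f Z2)) := by
      rw [← _root_.map_smul, ← _root_.map_smul, ← map_add, ← map_sub]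
      congr 1
      rw [hGcalc]
      ext (i | i) (j | j) <;> simp [fromBlocks, Matrix.sub_apply]
    rw [← this]
    exact hmain
  -- transfer back
  rw [hρapp] at hmain2
  have hW : (fromBlocks (l • cfc f X + (1 - l) • cfc f Y - cfc f Z1) 0 0
      ((1 - l) • cfc f X + l • cfc f Y - cfc f Z2)).PosSemidef :=
    (posSemidef_submatrix_equiv e.symm).mp hmain2
  have := hW.submatrix Sum.inl
  have heq : (fromBlocks (l • cfc f X + (1 - l) • cfc f Y - cfc f Z1) 0 0
      ((1 - l) • cfc f X + l • cfc f Y - cfc f Z2)).submatrix Sum.inl Sum.inl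
      = l • cfc f X + (1 - l) • cfc f Y - cfc f Z1 := by
    ext i j
    simp [fromBlocks]
  rwa [heq] at this

end Main
end

section
/- Let C be a contraction on a complex Hilbert space K (i.e. ‖C‖ ≤ 1), and set D = (1 − CC*)^{1/2} and E = (1 − C*C)^{1/2}. Then the 2×2 operator block matrices U = [[C, D],[E, −C*]] and V = [[C, −D],[E, C*]] acting on K ⊕ K are unitary, and for every bounded operator A on K one has (1/2) U* [[A,0],[0,0]] U + (1/2) V* [[A,0],[0,0]] V = [[C*AC, 0],[0, DAD]]. -/
open Polynomial in
lemma cfc_sqrt_intertwine {A : Type*} [CStarAlgebra A]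
    (c a b : A) (hab : c * a = b * c)
    (ha : IsSelfAdjoint a) (hb : IsSelfAdjoint b)
    (hsa : spectrum ℝ a ⊆ Set.Icc 0 1) (hsb : spectrum ℝ b ⊆ Set.Icc 0 1) :
    c * cfc Real.sqrt a = cfc Real.sqrt b * c := by
  have hpow : ∀ n : ℕ, c * a ^ n = b ^ n * c := by
    intro n; induction n with
    | zero => simp
    | succ n ih => rw [pow_succ, pow_succ, ← mul_assoc, ih, mul_assoc, hab, ← mul_assoc]
  have hpoly : ∀ q : ℝ[X], c * aeval a q = aeval b q * c := by
    intro q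
    induction q using Polynomial.induction_on' with
    | add p q hp hq => simp only [map_add, mul_add, add_mul, hp, hq]
    | monomial n r =>
      simp only [aeval_monomial]
      rw [← mul_assoc, ← Algebra.commutes, mul_assoc, hpow, ← mul_assoc, Algebra.commutes,
        mul_assoc]
  have happrox : ∀ ε > 0, ∃ q : ℝ[X], ∀ x ∈ Set.Icc (0:ℝ) 1, |Real.sqrt x - q.eval x| ≤ ε := by
    intro ε hε
    have h := polynomialFunctions_closure_eq_top (0:ℝ) 1
    let f : C(Set.Icc (0:ℝ) 1, ℝ) :=
      ⟨fun x => Real.sqrt x, Real.continuous_sqrt.comp continuous_subtype_val⟩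
    have hf : f ∈ closure (polynomialFunctions (Set.Icc (0:ℝ) 1) : Set C(Set.Icc (0:ℝ) 1, ℝ)) := by
      rw [← Subalgebra.topologicalClosure_coe, h]
      trivial
    rw [Metric.mem_closure_iff] at hf
    obtain ⟨g, hg, hdist⟩ := hf ε hε
    rw [SetLike.mem_coe, polynomialFunctions] at hg
    obtain ⟨q, -, hq⟩ := hg
    refine ⟨q, fun x hx => ?_⟩
    have h1 := ContinuousMap.dist_apply_le_dist (f := f) (g := g) ⟨x, hx⟩
    have h2 : g ⟨x, hx⟩ = q.eval x := by
      rw [← hq]; simp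
    rw [Real.dist_eq] at h1
    have : (f ⟨x, hx⟩ : ℝ) = Real.sqrt x := rfl
    rw [this, h2] at h1
    exact h1.trans hdist.le
  have key : ∀ ε > 0, ‖c * cfc Real.sqrt a - cfc Real.sqrt b * c‖ ≤ 2 * ‖c‖ * ε := by
    intro ε hε
    obtain ⟨q, hq⟩ := happrox ε hε
    have hca : cfc Real.sqrt a - aeval a q = cfc (fun x => Real.sqrt x - q.eval x) a := by
      rw [cfc_sub Real.sqrt (fun x => q.eval x) a, cfc_polynomial q a]
    have hcb : cfc Real.sqrt b - aeval b q = cfc (fun x => Real.sqrt x - q.eval x) b := by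
      rw [cfc_sub Real.sqrt (fun x => q.eval x) b, cfc_polynomial q b]
    have hna : ‖cfc Real.sqrt a - aeval a q‖ ≤ ε := by
      rw [hca]
      exact norm_cfc_le hε.le fun x hx => by
        rw [Real.norm_eq_abs]; exact hq x (hsa hx)
    have hnb : ‖cfc Real.sqrt b - aeval b q‖ ≤ ε := by
      rw [hcb]
      exact norm_cfc_le hε.le fun x hx => by
        rw [Real.norm_eq_abs]; exact hq x (hsb hx)
    have hsplit : c * cfc Real.sqrt a - cfc Real.sqrt b * c =
        c * (cfc Real.sqrt a - aeval a q) + (aeval b q - cfc Real.sqrt b) * c := by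
      rw [mul_sub, sub_mul, hpoly q]; abel
    rw [hsplit]
    calc ‖c * (cfc Real.sqrt a - aeval a q) + (aeval b q - cfc Real.sqrt b) * c‖
        ≤ ‖c * (cfc Real.sqrt a - aeval a q)‖ + ‖(aeval b q - cfc Real.sqrt b) * c‖ :=
          norm_add_le _ _
      _ ≤ ‖c‖ * ‖cfc Real.sqrt a - aeval a q‖ + ‖aeval b q - cfc Real.sqrt b‖ * ‖c‖ :=
          add_le_add (norm_mul_le _ _) (norm_mul_le _ _)
      _ ≤ ‖c‖ * ε + ε * ‖c‖ := by
          have : ‖aeval b q - cfc Real.sqrt b‖ ≤ ε := by rwa [norm_sub_rev]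
          have h4 := norm_nonneg c
          nlinarith
      _ = 2 * ‖c‖ * ε := by ring
  have hzero : ‖c * cfc Real.sqrt a - cfc Real.sqrt b * c‖ ≤ 0 := by
    by_contra hcon
    push_neg at hcon
    set δ := ‖c * cfc Real.sqrt a - cfc Real.sqrt b * c‖ with hδ
    have h1 := key (δ / (2 * ‖c‖ + 1)) (by positivity)
    have hd : (0:ℝ) < 2 * ‖c‖ + 1 := by positivity
    have h2 : δ / (2 * ‖c‖ + 1) * (2 * ‖c‖ + 1) = δ := div_mul_cancel₀ _ hd.ne'
    have h3 : 0 < δ / (2 * ‖c‖ + 1) := by positivity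
    nlinarith
  rw [← sub_eq_zero]
  exact norm_le_zero_iff.mp hzero


set_option maxHeartbeats 1000000 in
set_option synthInstance.maxHeartbeats 400000 in
/-- For a contraction `C` on a complex Hilbert space `K`, with
`D = (1 - CC*)^{1/2}` and `E = (1 - C*C)^{1/2}`, the block matrices
`U = [[C, D],[E, -C*]]` and `V = [[C, -D],[E, C*]]` (acting on `K ⊕ K`, here
realized as `2×2` matrices over the operator algebra `B(K)`) are unitary, and
`(1/2) U* [[A,0],[0,0]] U + (1/2) V* [[A,0],[0,0]] V = [[C*AC, 0],[0, DAD]]`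
for every bounded operator `A` on `K`. -/
theorem block_unitaries_average {K : Type*} [NormedAddCommGroup K]
    [InnerProductSpace ℂ K] [CompleteSpace K]
    (C : K →L[ℂ] K) (hC : ‖C‖ ≤ 1)
    (D E : K →L[ℂ] K)
    (hD : D = cfc Real.sqrt (1 - C * star C))
    (hE : E = cfc Real.sqrt (1 - star C * C))
    (U V : Matrix (Fin 2) (Fin 2) (K →L[ℂ] K))
    (hU : U = !![C, D; E, -star C])
    (hV : V = !![C, -D; E, star C]) :
    U ∈ unitary (Matrix (Fin 2) (Fin 2) (K →L[ℂ] K)) ∧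
    V ∈ unitary (Matrix (Fin 2) (Fin 2) (K →L[ℂ] K)) ∧
    ∀ A : K →L[ℂ] K,
      (2 : ℝ)⁻¹ • (star U * !![A, 0; 0, 0] * U) + (2 : ℝ)⁻¹ • (star V * !![A, 0; 0, 0] * V) =
        !![star C * A * C, 0; 0, D * A * D] := by
  obtain hK | hK := subsingleton_or_nontrivial K
  · have : Subsingleton (Matrix (Fin 2) (Fin 2) (K →L[ℂ] K)) := by infer_instance
    exact ⟨by rw [Subsingleton.elim U 1]; exact one_mem _,
      by rw [Subsingleton.elim V 1]; exact one_mem _, fun A => Subsingleton.elim _ _⟩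
  -- nontrivial case
  have ha0 : (0:K →L[ℂ] K) ≤ 1 - star C * C := by
    rw [sub_nonneg, ← CStarAlgebra.norm_le_one_iff_of_nonneg _ (star_mul_self_nonneg C),
      CStarRing.norm_star_mul_self]
    nlinarith [norm_nonneg C]
  have hb0 : (0:K →L[ℂ] K) ≤ 1 - C * star C := by
    rw [sub_nonneg, ← CStarAlgebra.norm_le_one_iff_of_nonneg _ (mul_star_self_nonneg C),
      CStarRing.norm_self_mul_star]
    nlinarith [norm_nonneg C]
  have hasa : IsSelfAdjoint (1 - star C * C : K →L[ℂ] K) :=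
    (IsSelfAdjoint.one _).sub (IsSelfAdjoint.star_mul_self C)
  have hbsa : IsSelfAdjoint (1 - C * star C : K →L[ℂ] K) :=
    (IsSelfAdjoint.one _).sub (IsSelfAdjoint.mul_star_self C)
  have hspec : ∀ a : K →L[ℂ] K, 0 ≤ a → a ≤ 1 → spectrum ℝ a ⊆ Set.Icc 0 1 := by
    intro a h0 h1 x hx
    refine ⟨spectrum_nonneg_of_nonneg h0 hx, ?_⟩
    have hn : ‖a‖ ≤ 1 := (CStarAlgebra.norm_le_one_iff_of_nonneg a h0).mpr h1
    exact (le_abs_self x).trans ((Real.norm_eq_abs x ▸ spectrum.norm_le_norm_of_mem hx).trans hn)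
  have hspa : spectrum ℝ (1 - star C * C : K →L[ℂ] K) ⊆ Set.Icc 0 1 :=
    hspec _ ha0 (by simpa using sub_le_self (1:K →L[ℂ] K) (star_mul_self_nonneg C))
  have hspb : spectrum ℝ (1 - C * star C : K →L[ℂ] K) ⊆ Set.Icc 0 1 :=
    hspec _ hb0 (by simpa using sub_le_self (1:K →L[ℂ] K) (mul_star_self_nonneg C))
  have hsq : ∀ a : K →L[ℂ] K, 0 ≤ a → cfc Real.sqrt a * cfc Real.sqrt a = a := by
    intro a h0
    rw [← cfc_mul Real.sqrt Real.sqrt a]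
    have h : cfc (fun x => Real.sqrt x * Real.sqrt x) a = cfc (fun x : ℝ => x) a :=
      cfc_congr fun x hx => Real.mul_self_sqrt (spectrum_nonneg_of_nonneg h0 hx)
    rw [h, cfc_id' ℝ a]
  have hD2 : D * D = 1 - C * star C := by rw [hD]; exact hsq _ hb0
  have hE2 : E * E = 1 - star C * C := by rw [hE]; exact hsq _ ha0
  have hDsa : IsSelfAdjoint D := hD ▸ cfc_predicate Real.sqrt _
  have hEsa : IsSelfAdjoint E := hE ▸ cfc_predicate Real.sqrt _
  have hCE : C * E = D * C := by
    rw [hD, hE]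
    exact cfc_sqrt_intertwine C _ _ (by noncomm_ring) hasa hbsa hspa hspb
  have hCD : star C * D = E * star C := by
    rw [hD, hE]
    exact cfc_sqrt_intertwine (star C) _ _ (by noncomm_ring) hbsa hasa hspb hspa
  have hsU : star U = !![star C, E; D, -C] := by
    rw [hU]
    ext i j
    fin_cases i <;> fin_cases j <;>
      simp [Matrix.star_eq_conjTranspose, Matrix.conjTranspose_apply, hDsa.star_eq, hEsa.star_eq]
  have hsV : star V = !![star C, E; -D, C] := by
    rw [hV]
    ext i j
    fin_cases i <;> fin_cases j <;>
      simp [Matrix.star_eq_conjTranspose, Matrix.conjTranspose_apply, hDsa.star_eq, hEsa.star_eq]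
  have e1 : star C * C + E * E = 1 := by rw [hE2]; abel
  have e2 : star C * D + E * (-star C) = 0 := by rw [mul_neg, hCD]; abel
  have e3 : D * C + (-C) * E = 0 := by rw [neg_mul, hCE]; abel
  have e4 : D * D + (-C) * (-star C) = 1 := by rw [neg_mul_neg, hD2]; abel
  have e5 : C * star C + D * D = 1 := by rw [hD2]; abel
  have e6 : C * E + D * (-C) = 0 := by rw [mul_neg, hCE]; abel
  have e7 : E * star C + (-star C) * D = 0 := by rw [neg_mul, hCD]; abel
  have e8 : E * E + (-star C) * (-C) = 1 := by rw [neg_mul_neg, hE2]; abel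
  have f2 : star C * (-D) + E * star C = 0 := by rw [mul_neg, hCD]; abel
  have f3 : (-D) * C + C * E = 0 := by rw [neg_mul, hCE]; abel
  have f4 : (-D) * (-D) + C * star C = 1 := by rw [neg_mul_neg, hD2]; abel
  have f5 : C * star C + (-D) * (-D) = 1 := by rw [neg_mul_neg, hD2]; abel
  have f6 : C * E + (-D) * C = 0 := by rw [neg_mul, hCE]; abel
  have f7 : E * star C + star C * (-D) = 0 := by rw [mul_neg, hCD]; abel
  have f8 : E * E + star C * C = 1 := by rw [hE2]; abel
  refine ⟨?_, ?_, ?_⟩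
  · rw [Unitary.mem_iff, hsU, hU, Matrix.mul_fin_two, Matrix.mul_fin_two, Matrix.one_fin_two,
      e1, e2, e3, e4, e5, e6, e7, e8]
    exact ⟨rfl, rfl⟩
  · rw [Unitary.mem_iff, hsV, hV, Matrix.mul_fin_two, Matrix.mul_fin_two, Matrix.one_fin_two,
      e1, f2, f3, f4, f5, f6, f7, f8]
    exact ⟨rfl, rfl⟩
  · intro A
    rw [hsU, hU, hsV, hV, Matrix.mul_fin_two, Matrix.mul_fin_two, Matrix.mul_fin_two,
      Matrix.mul_fin_two]
    ext i j
    fin_cases i <;> fin_cases j <;>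
      simp [Matrix.add_apply, Matrix.smul_apply, mul_neg, neg_mul] <;>
      module
end

section
/- Let g be a continuous real function defined on an open interval I ⊆ ℝ. Then the functional calculus X ↦ g(X) is strongly continuous on norm-bounded subsets of bounded self-adjoint operators with spectra contained in a fixed compact subset of I: if (X_i) is a norm-bounded net of bounded self-adjoint operators with spectra in a compact subset K of I converging in the strong operator topology to a self-adjoint operator X with spectrum in K, then g(X_i) converges to g(X) in the strong operator topology. -/
open Filter Polynomial

private lemma pow_tendsto_sot {H : Type*} [NormedAddCommGroup H]
    [InnerProductSpace ℂ H] {ι : Type*} {l : Filter ι}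
    {X : ι → (H →L[ℂ] H)} {Xlim : H →L[ℂ] H} {M : ℝ}
    (hM : ∀ i, ‖X i‖ ≤ M)
    (hconv : ∀ ξ : H, Tendsto (fun i => X i ξ) l (nhds (Xlim ξ))) :
    ∀ (n : ℕ) (ξ : H), Tendsto (fun i => (X i ^ n) ξ) l (nhds ((Xlim ^ n) ξ)) := by
  intro n
  induction n with
  | zero => intro ξ; simpa using tendsto_const_nhds
  | succ n ih =>
    intro ξ
    rw [tendsto_iff_norm_sub_tendsto_zero]
    have hb : ∀ i, ‖(X i ^ (n+1)) ξ - (Xlim ^ (n+1)) ξ‖ ≤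
        M * ‖(X i ^ n) ξ - (Xlim ^ n) ξ‖ + ‖X i ((Xlim ^ n) ξ) - Xlim ((Xlim ^ n) ξ)‖ := by
      intro i
      have heq : (X i ^ (n+1)) ξ - (Xlim ^ (n+1)) ξ
          = X i ((X i ^ n) ξ - (Xlim ^ n) ξ)
            + (X i ((Xlim ^ n) ξ) - Xlim ((Xlim ^ n) ξ)) := by
        simp only [pow_succ', ContinuousLinearMap.mul_apply, map_sub]
        abel
      rw [heq]
      refine (norm_add_le _ _).trans ?_
      gcongr
      calc ‖X i ((X i ^ n) ξ - (Xlim ^ n) ξ)‖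
          ≤ ‖X i‖ * ‖(X i ^ n) ξ - (Xlim ^ n) ξ‖ := (X i).le_opNorm _
        _ ≤ M * ‖(X i ^ n) ξ - (Xlim ^ n) ξ‖ :=
            mul_le_mul_of_nonneg_right (hM i) (norm_nonneg _)
    have h1 : Tendsto (fun i => M * ‖(X i ^ n) ξ - (Xlim ^ n) ξ‖
        + ‖X i ((Xlim ^ n) ξ) - Xlim ((Xlim ^ n) ξ)‖) l (nhds 0) := by
      have ha := (tendsto_iff_norm_sub_tendsto_zero.mp (ih ξ)).const_mul M
      have hb' := tendsto_iff_norm_sub_tendsto_zero.mp (hconv ((Xlim ^ n) ξ))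
      simpa using ha.add hb'
    exact squeeze_zero (fun i => norm_nonneg _) hb h1

private lemma aeval_tendsto_sot {H : Type*} [NormedAddCommGroup H]
    [InnerProductSpace ℂ H] {ι : Type*} {l : Filter ι}
    {X : ι → (H →L[ℂ] H)} {Xlim : H →L[ℂ] H} {M : ℝ}
    (hM : ∀ i, ‖X i‖ ≤ M)
    (hconv : ∀ ξ : H, Tendsto (fun i => X i ξ) l (nhds (Xlim ξ)))
    (p : ℝ[X]) :
    ∀ ξ : H, Tendsto (fun i => (aeval (X i) p) ξ) l (nhds ((aeval Xlim p) ξ)) := by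
  induction p using Polynomial.induction_on' with
  | add p q hp hq =>
    intro ξ
    simpa only [map_add, ContinuousLinearMap.add_apply] using (hp ξ).add (hq ξ)
  | monomial n c =>
    intro ξ
    simp only [aeval_monomial, Algebra.algebraMap_eq_smul_one, smul_mul_assoc, one_mul,
      ContinuousLinearMap.smul_apply]
    exact (pow_tendsto_sot hM hconv n ξ).const_smul c

open Filter in
/-- For a continuous real function `g` on an open interval `I`, the continuous
functional calculus `X ↦ g(X)` is strongly continuous on norm-bounded sets of
self-adjoint operators with spectra contained in a fixed compact subset `K ⊆ I`:
if a norm-bounded net of self-adjoint operators with spectra in `K` converges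
strongly to a self-adjoint operator with spectrum in `K`, then the images under
`g` converge strongly as well. -/
theorem cfc_strongly_continuous {H : Type*} [NormedAddCommGroup H]
    [InnerProductSpace ℂ H] [CompleteSpace H]
    (I : Set ℝ) (hIopen : IsOpen I) (hIconn : I.OrdConnected)
    (g : ℝ → ℝ) (hg : ContinuousOn g I)
    (K : Set ℝ) (hK : IsCompact K) (hKI : K ⊆ I)
    {ι : Type*} (l : Filter ι) (X : ι → (H →L[ℂ] H)) (Xlim : H →L[ℂ] H)
    (hsa : ∀ i, IsSelfAdjoint (X i)) (hsaX : IsSelfAdjoint Xlim)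
    (hspec : ∀ i, spectrum ℝ (X i) ⊆ K) (hspecX : spectrum ℝ Xlim ⊆ K)
    (hbdd : ∃ M : ℝ, ∀ i, ‖X i‖ ≤ M)
    (hconv : ∀ ξ : H, Tendsto (fun i => X i ξ) l (nhds (Xlim ξ))) :
    ∀ ξ : H, Tendsto (fun i => cfc g (X i) ξ) l (nhds (cfc g Xlim ξ)) := by
  intro ξ
  rcases subsingleton_or_nontrivial H with hH | hH
  · have : (fun i => cfc g (X i) ξ) = fun _ => cfc g Xlim ξ :=
      funext fun i => Subsingleton.elim _ _
    rw [this]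
    exact tendsto_const_nhds
  obtain ⟨M, hM⟩ := hbdd
  have hKne : K.Nonempty := (hsaX.spectrum_nonempty).mono hspecX
  set a := sInf K with ha
  set b := sSup K with hb
  have haK : a ∈ K := hK.sInf_mem hKne
  have hbK : b ∈ K := hK.sSup_mem hKne
  have hsub : K ⊆ Set.Icc a b := fun x hx =>
    ⟨csInf_le hK.bddBelow hx, le_csSup hK.bddAbove hx⟩
  have hIccI : Set.Icc a b ⊆ I := hIconn.out (hKI haK) (hKI hbK)
  have hgIcc : ContinuousOn g (Set.Icc a b) := hg.mono hIccI
  rw [Metric.tendsto_nhds]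
  intro ε hε
  have hξpos : (0 : ℝ) < ‖ξ‖ + 1 := by positivity
  set δ := ε / (3 * (‖ξ‖ + 1)) with hδ
  have hδpos : 0 < δ := by positivity
  obtain ⟨p, hp⟩ := exists_polynomial_near_of_continuousOn a b g hgIcc δ hδpos
  have hcfc : ∀ Y : H →L[ℂ] H, IsSelfAdjoint Y → spectrum ℝ Y ⊆ K →
      ‖cfc g Y - aeval Y p‖ ≤ δ := by
    intro Y hY hYs
    have hgY : ContinuousOn g (spectrum ℝ Y) := hg.mono fun x hx => hKI (hYs hx)
    rw [← cfc_polynomial (R := ℝ) p Y hY,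
      ← cfc_sub g (fun x => Polynomial.eval x p) Y hgY p.continuous.continuousOn]
    refine norm_cfc_le hδpos.le fun x hx => ?_
    have := (hp x (hsub (hYs hx))).le
    rw [Real.norm_eq_abs, abs_sub_comm]
    exact this
  have hδξ : δ * ‖ξ‖ ≤ ε / 3 := by
    have h1 : δ * (‖ξ‖ + 1) = ε / 3 := by
      rw [hδ]; field_simp
    nlinarith [norm_nonneg ξ, hδpos]
  have hpoly := aeval_tendsto_sot hM hconv p ξ
  rw [Metric.tendsto_nhds] at hpoly
  filter_upwards [hpoly (ε / 3) (by positivity)] with i hi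
  have hd1 : ‖cfc g (X i) ξ - (aeval (X i) p) ξ‖ ≤ ε / 3 := by
    calc ‖cfc g (X i) ξ - (aeval (X i) p) ξ‖
        = ‖(cfc g (X i) - aeval (X i) p) ξ‖ := by simp
      _ ≤ ‖cfc g (X i) - aeval (X i) p‖ * ‖ξ‖ :=
          (cfc g (X i) - aeval (X i) p).le_opNorm ξ
      _ ≤ δ * ‖ξ‖ := mul_le_mul_of_nonneg_right (hcfc _ (hsa i) (hspec i)) (norm_nonneg _)
      _ ≤ ε / 3 := hδξ
  have hd3 : ‖(aeval Xlim p) ξ - cfc g Xlim ξ‖ ≤ ε / 3 := by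
    calc ‖(aeval Xlim p) ξ - cfc g Xlim ξ‖
        = ‖(cfc g Xlim - aeval Xlim p) ξ‖ := by rw [← norm_neg]; simp
      _ ≤ ‖cfc g Xlim - aeval Xlim p‖ * ‖ξ‖ :=
          (cfc g Xlim - aeval Xlim p).le_opNorm ξ
      _ ≤ δ * ‖ξ‖ := mul_le_mul_of_nonneg_right (hcfc _ hsaX hspecX) (norm_nonneg _)
      _ ≤ ε / 3 := hδξ
  have hd2 : dist ((aeval (X i) p) ξ) ((aeval Xlim p) ξ) < ε / 3 := hi
  calc dist (cfc g (X i) ξ) (cfc g Xlim ξ)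
      ≤ dist (cfc g (X i) ξ) ((aeval (X i) p) ξ)
        + dist ((aeval (X i) p) ξ) ((aeval Xlim p) ξ)
        + dist ((aeval Xlim p) ξ) (cfc g Xlim ξ) := dist_triangle4 _ _ _ _
    _ < ε / 3 + ε / 3 + ε / 3 := by
        rw [dist_eq_norm] at hd2
        rw [dist_eq_norm, dist_eq_norm, dist_eq_norm]
        exact add_lt_add_of_lt_of_le (add_lt_add_of_le_of_lt hd1 hd2) hd3
    _ = ε := by ring
end
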